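/- MGDA as projection yields a common descent direction with a margin unless Pareto-stationary: fix g_1, …, g_K ∈ ℝ^d, let Δ^K be the probability simplex, let λ* minimize ‖Σ_k λ_k g_k‖₂² over λ ∈ Δ^K, and set g_mix := Σ_k λ*_k g_k. Then: (i) g_mix is the Euclidean projection of the origin onto the convex hull C := conv{g_1, …, g_K}; (ii) if g_mix = 0 then 0 ∈ C; (iii) if g_mix ≠ 0 then ⟨g_k, −g_mix⟩ ≤ −‖g_mix‖₂² for all k, so −g_mix is a common descent direction. -/

import Mathlib

open BigOperators

lemma mem_hull_exists_simplex {d K : ℕ} (g : Fin K → EuclideanSpace ℝ (Fin d))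
    (y : EuclideanSpace ℝ (Fin d)) (hy : y ∈ convexHull ℝ (Set.range g)) :
    ∃ μ ∈ stdSimplex ℝ (Fin K), y = ∑ k, μ k • g k := by
  rw [convexHull_range_eq_exists_affineCombination] at hy
  obtain ⟨s, w, hw0, hw1, rfl⟩ := hy
  refine ⟨fun k => if k ∈ s then w k else 0,
    ⟨fun k => by by_cases h : k ∈ s <;> simp [h] <;> exact hw0 k h, ?_⟩, ?_⟩
  · rw [Finset.sum_ite_mem, Finset.univ_inter, hw1]
  · rw [Finset.affineCombination_eq_linear_combination s g w hw1]
    simp only [ite_smul, zero_smul]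
    rw [Finset.sum_ite_mem, Finset.univ_inter]

/-- MGDA as projection: the minimum-norm convex combination of gradients is the
projection of the origin onto the convex hull; it yields a common descent
direction with margin unless it vanishes (Pareto stationarity). -/
theorem mgda_projection_common_descent
    {d K : ℕ} (g : Fin K → EuclideanSpace ℝ (Fin d))
    (lam : Fin K → ℝ) (hlam : lam ∈ stdSimplex ℝ (Fin K))
    (hmin : ∀ μ ∈ stdSimplex ℝ (Fin K),
      ‖∑ k, lam k • g k‖ ^ 2 ≤ ‖∑ k, μ k • g k‖ ^ 2)
    (gmix : EuclideanSpace ℝ (Fin d)) (hgmix : gmix = ∑ k, lam k • g k) :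
    (gmix ∈ convexHull ℝ (Set.range g) ∧
      ∀ y ∈ convexHull ℝ (Set.range g), ‖gmix‖ ≤ ‖y‖) ∧
    (gmix = 0 → (0 : EuclideanSpace ℝ (Fin d)) ∈ convexHull ℝ (Set.range g)) ∧
    (gmix ≠ 0 → ∀ k, (inner ℝ (g k) (-gmix) : ℝ) ≤ -‖gmix‖ ^ 2) := by
  have hmem : gmix ∈ convexHull ℝ (Set.range g) := by
    rw [hgmix]
    exact (convex_convexHull ℝ _).sum_mem (fun k _ => hlam.1 k) hlam.2
      (fun k _ => subset_convexHull ℝ _ (Set.mem_range_self k))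
  have hnormle : ∀ y ∈ convexHull ℝ (Set.range g), ‖gmix‖ ≤ ‖y‖ := by
    intro y hy
    obtain ⟨μ, hμ, rfl⟩ := mem_hull_exists_simplex g y hy
    have := hmin μ hμ
    rw [← hgmix] at this
    nlinarith [norm_nonneg gmix, norm_nonneg (∑ k, μ k • g k)]
  refine ⟨⟨hmem, hnormle⟩, fun h0 => h0 ▸ hmem, ?_⟩
  intro hne k
  -- variational inequality: ⟨gmix, g k - gmix⟩ ≥ 0
  have key : (0 : ℝ) ≤ inner ℝ gmix (g k - gmix) := by
    by_contra hneg
    push_neg at hneg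
    set c : ℝ := inner ℝ gmix (g k - gmix) with hc
    set B : ℝ := ‖g k - gmix‖ ^ 2 with hB
    have hBnn : 0 ≤ B := by positivity
    set t : ℝ := min 1 (-c / (B + 1)) with ht
    have ht0 : 0 < t := lt_min one_pos (div_pos (by linarith) (by positivity))
    have ht1 : t ≤ 1 := min_le_left _ _
    -- μ := (1-t) lam + t δ_k
    set μ : Fin K → ℝ := fun j => (1 - t) * lam j + t * (if j = k then 1 else 0) with hμdef
    have hμ : μ ∈ stdSimplex ℝ (Fin K) := by
      constructor
      · intro j
        have := hlam.1 j
        by_cases hj : j = k <;> simp [hμdef, hj] <;>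
          nlinarith [mul_nonneg (by linarith : (0:ℝ) ≤ 1 - t) (hlam.1 k), mul_nonneg (by linarith : (0:ℝ) ≤ 1 - t) this]
      · simp only [hμdef, Finset.sum_add_distrib, ← Finset.mul_sum, hlam.2]
        rw [Finset.sum_ite_eq' Finset.univ k (fun _ => (1:ℝ))]
        simp
    have hsum : ∑ j, μ j • g j = gmix + t • (g k - gmix) := by
      simp only [hμdef, add_smul, mul_smul, Finset.sum_add_distrib, ← Finset.smul_sum, ← hgmix]
      have : ∑ j, ((if j = k then (1:ℝ) else 0) • g j) = g k := by
        rw [Finset.sum_eq_single k] <;> simp +contextual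
      rw [this, smul_sub]
      module
    have hle := hmin μ hμ
    rw [← hgmix, hsum] at hle
    have expand : ‖gmix + t • (g k - gmix)‖ ^ 2 = ‖gmix‖ ^ 2 + 2 * t * c + t ^ 2 * B := by
      rw [hc, hB, norm_add_sq_real, real_inner_smul_right, norm_smul, mul_pow,
        Real.norm_eq_abs, sq_abs]
      ring
    rw [expand] at hle
    -- 0 ≤ 2 t c + t² B, with t > 0: 0 ≤ 2c + t B
    have h1 : 0 ≤ 2 * c + t * B := by nlinarith
    have h2 : t * B ≤ -c := by
      have : t ≤ -c / (B + 1) := min_le_right _ _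
      have hb : -c / (B + 1) * B ≤ -c := by
        rw [div_mul_eq_mul_div, div_le_iff₀ (by positivity)]
        nlinarith
      nlinarith
    linarith
  have hn : (inner ℝ gmix gmix : ℝ) = ‖gmix‖ ^ 2 := real_inner_self_eq_norm_sq gmix
  rw [inner_neg_right]
  have : (inner ℝ gmix (g k) : ℝ) = inner ℝ (g k) gmix := real_inner_comm _ _
  rw [inner_sub_right] at key
  linarith
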